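/- Let 0 ≥ s > −1/m and −1/2 < b' < ms/2 for m ≥ 2. Then there exists ε > 0 such that for all ξ, ξ₁,...,ξ_m ∈ ℝ^n with ξ = Σξ_i and τ, τ₁,...,τ_m ∈ ℝ with τ = Στ_i, one has ⟨ξ⟩^ε ∏_{i=1}^m ⟨ξ_i⟩^{−s+ε} ≤ c ( ⟨τ + |ξ|²⟩^{−b'} + Σ_{i=1}^m ⟨τ_i − |ξ_i|²⟩^{−b'} χ_{A_i} ), where A_i is the set where ⟨τ_i − |ξ_i|²⟩ ≥ ⟨τ + |ξ|²⟩. -/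

import Mathlib

set_option maxHeartbeats 1000000


open scoped BigOperators

/-- Japanese bracket. -/
noncomputable def jb (x : ℝ) : ℝ := Real.sqrt (1 + x ^ 2)

/-- Japanese bracket of a vector. -/
noncomputable def jbv {n : ℕ} (x : EuclideanSpace ℝ (Fin n)) : ℝ := Real.sqrt (1 + ‖x‖ ^ 2)

lemma jb_ge_one (x : ℝ) : 1 ≤ jb x := by
  have : (1:ℝ) = Real.sqrt 1 := by simp
  rw [this]
  exact Real.sqrt_le_sqrt (by nlinarith [sq_nonneg x])

lemma jb_ge_abs (x : ℝ) : |x| ≤ jb x := by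
  have : |x| = Real.sqrt (x ^ 2) := by
    rw [Real.sqrt_sq_eq_abs]
  rw [this]
  exact Real.sqrt_le_sqrt (by nlinarith)

lemma jbv_ge_one {n : ℕ} (x : EuclideanSpace ℝ (Fin n)) : 1 ≤ jbv x := by
  have : (1:ℝ) = Real.sqrt 1 := by simp
  rw [this]
  exact Real.sqrt_le_sqrt (by nlinarith [sq_nonneg ‖x‖])

lemma jbv_sq {n : ℕ} (x : EuclideanSpace ℝ (Fin n)) : jbv x ^ 2 = 1 + ‖x‖ ^ 2 := by
  unfold jbv
  exact Real.sq_sqrt (by positivity)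

/-- Pointwise weight estimate reducing the multilinear `X^{s,b}` estimate for `ū^m` to
Strichartz estimates: for `0 ≥ s > −1/m`, `−1/2 < b' < ms/2`, there is `ε > 0` with
`⟨ξ⟩^ε ∏ᵢ ⟨ξᵢ⟩^{−s+ε} ≤ c (⟨τ+|ξ|²⟩^{−b'} + Σᵢ ⟨τᵢ−|ξᵢ|²⟩^{−b'} χ_{Aᵢ})`, where on `Aᵢ`
one has `⟨τᵢ−|ξᵢ|²⟩ ≥ ⟨τ+|ξ|²⟩`. -/
theorem multilinear_weight_estimate (m n : ℕ) (hm : 2 ≤ m) (s b' : ℝ)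
    (hs0 : s ≤ 0) (hs : -(1 / (m : ℝ)) < s) (hb'1 : -(1 / 2 : ℝ) < b')
    (hb'2 : b' < (m : ℝ) * s / 2) :
    ∃ ε > (0 : ℝ), ∃ c > (0 : ℝ),
      ∀ (ξ : Fin m → EuclideanSpace ℝ (Fin n)) (τ : Fin m → ℝ)
        (Ξ : EuclideanSpace ℝ (Fin n)) (T : ℝ), Ξ = ∑ i, ξ i → T = ∑ i, τ i →
      jbv Ξ ^ ε * ∏ i, jbv (ξ i) ^ (-s + ε) ≤
        c * (jb (T + ‖Ξ‖ ^ 2) ^ (-b') +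
          ∑ i, if jb (T + ‖Ξ‖ ^ 2) ≤ jb (τ i - ‖ξ i‖ ^ 2) then
            jb (τ i - ‖ξ i‖ ^ 2) ^ (-b') else 0) := by
  have hm1 : (1:ℝ) ≤ (m:ℝ) := by exact_mod_cast Nat.one_le_of_lt hm
  have hb'neg : b' < 0 := lt_of_lt_of_le hb'2 (by nlinarith)
  set ε : ℝ := ((m:ℝ) * s - 2 * b') / (2 * ((m:ℝ) + 1)) with hεdef
  have hεpos : 0 < ε := by
    apply div_pos (by nlinarith) (by nlinarith)
  set c : ℝ := (2 * ((m:ℝ) + 1)) ^ (-b') with hcdef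
  have hcpos : 0 < c := Real.rpow_pos_of_pos (by nlinarith) _
  refine ⟨ε, hεpos, c, hcpos, ?_⟩
  intro ξ τ Ξ T hΞ hT
  set D := jb (T + ‖Ξ‖ ^ 2) with hDdef
  set d := fun i => jb (τ i - ‖ξ i‖ ^ 2) with hddef
  have hD1 : 1 ≤ D := jb_ge_one _
  have hd1 : ∀ i, 1 ≤ d i := fun i => jb_ge_one _
  have hne : (Finset.univ : Finset (Fin m)).Nonempty :=
    ⟨⟨0, by omega⟩, Finset.mem_univ _⟩
  set S := Finset.univ.sup' hne d with hSdef
  set M := max D S with hMdef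
  have hM1 : 1 ≤ M := le_trans hD1 (le_max_left _ _)
  -- resonance identity bound
  have hres : ‖Ξ‖ ^ 2 + ∑ i, ‖ξ i‖ ^ 2 ≤ D + ∑ i, d i := by
    have h1 : ‖Ξ‖ ^ 2 + ∑ i, ‖ξ i‖ ^ 2 =
        (T + ‖Ξ‖ ^ 2) - ∑ i, (τ i - ‖ξ i‖ ^ 2) := by
      rw [hT, Finset.sum_sub_distrib]; ring
    calc ‖Ξ‖ ^ 2 + ∑ i, ‖ξ i‖ ^ 2
        = (T + ‖Ξ‖ ^ 2) - ∑ i, (τ i - ‖ξ i‖ ^ 2) := h1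
      _ ≤ |(T + ‖Ξ‖ ^ 2) - ∑ i, (τ i - ‖ξ i‖ ^ 2)| := le_abs_self _
      _ ≤ |T + ‖Ξ‖ ^ 2| + |∑ i, (τ i - ‖ξ i‖ ^ 2)| := abs_sub _ _
      _ ≤ |T + ‖Ξ‖ ^ 2| + ∑ i, |τ i - ‖ξ i‖ ^ 2| := by
          gcongr
          exact Finset.abs_sum_le_sum_abs _ _
      _ ≤ D + ∑ i, d i := by
          gcongr with i
          · exact jb_ge_abs _
          · exact jb_ge_abs _
  set R : ℝ := jbv Ξ ^ 2 + ∑ i, jbv (ξ i) ^ 2 with hRdef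
  have hRval : R = ((m:ℝ) + 1) + (‖Ξ‖ ^ 2 + ∑ i, ‖ξ i‖ ^ 2) := by
    rw [hRdef, jbv_sq]
    have : ∑ i : Fin m, jbv (ξ i) ^ 2 = ∑ i : Fin m, (1 + ‖ξ i‖ ^ 2) := by
      apply Finset.sum_congr rfl; intro i _; exact jbv_sq _
    rw [this, Finset.sum_add_distrib]
    simp [Finset.card_univ]
    ring
  have hRM : R ≤ 2 * ((m:ℝ) + 1) * M := by
    have hDM : D ≤ M := le_max_left _ _
    have hdM : ∀ i, d i ≤ M := fun i =>
      le_trans (Finset.le_sup' d (Finset.mem_univ i)) (le_max_right _ _)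
    have hsum : ∑ i, d i ≤ (m:ℝ) * M := by
      calc ∑ i, d i ≤ ∑ _i : Fin m, M := Finset.sum_le_sum (fun i _ => hdM i)
        _ = (m:ℝ) * M := by simp [Finset.card_univ]
    have : ‖Ξ‖ ^ 2 + ∑ i, ‖ξ i‖ ^ 2 ≤ ((m:ℝ) + 1) * M := by
      calc ‖Ξ‖ ^ 2 + ∑ i, ‖ξ i‖ ^ 2 ≤ D + ∑ i, d i := hres
        _ ≤ M + (m:ℝ) * M := by gcongr
        _ = ((m:ℝ) + 1) * M := by ring
    rw [hRval]
    nlinarith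
  have hRpos : (0:ℝ) < R := by
    have := jbv_ge_one Ξ
    have h2 : (0:ℝ) ≤ ∑ i, jbv (ξ i) ^ 2 :=
      Finset.sum_nonneg (fun i _ => sq_nonneg _)
    nlinarith
  set Q : ℝ := Real.sqrt R with hQdef
  have hQ1 : 1 ≤ Q := by
    rw [hQdef, show (1:ℝ) = Real.sqrt 1 by simp]
    apply Real.sqrt_le_sqrt
    have := jbv_ge_one Ξ
    have h2 : (0:ℝ) ≤ ∑ i, jbv (ξ i) ^ 2 :=
      Finset.sum_nonneg (fun i _ => sq_nonneg _)
    nlinarith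
  have hQsq : Q ^ 2 = R := Real.sq_sqrt (le_of_lt hRpos)
  have hQΞ : jbv Ξ ≤ Q := by
    have h0 : 0 ≤ jbv Ξ := le_trans zero_le_one (jbv_ge_one Ξ)
    have h2 : jbv Ξ ^ 2 ≤ R := by
      rw [hRdef]
      exact le_add_of_nonneg_right (Finset.sum_nonneg (fun i _ => sq_nonneg _))
    rw [← Real.sqrt_sq h0, hQdef]
    exact Real.sqrt_le_sqrt h2
  have hQi : ∀ i, jbv (ξ i) ≤ Q := by
    intro i
    have h0 : 0 ≤ jbv (ξ i) := le_trans zero_le_one (jbv_ge_one _)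
    have h2 : jbv (ξ i) ^ 2 ≤ R := by
      have := Finset.single_le_sum (fun j _ => sq_nonneg (jbv (ξ j))) (Finset.mem_univ i)
      rw [hRdef]; linarith [sq_nonneg (jbv Ξ)]
    rw [← Real.sqrt_sq h0, hQdef]
    exact Real.sqrt_le_sqrt h2
  -- LHS bound
  have hεs : 0 ≤ -s + ε := by linarith
  have hQ0 : 0 ≤ Q := le_trans zero_le_one hQ1
  have h1 : jbv Ξ ^ ε * ∏ i, jbv (ξ i) ^ (-s + ε) ≤ Q ^ (ε + (m:ℝ) * (-s + ε)) := by
    have hA : jbv Ξ ^ ε ≤ Q ^ ε :=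
      Real.rpow_le_rpow (le_trans zero_le_one (jbv_ge_one Ξ)) hQΞ (le_of_lt hεpos)
    have hB : ∏ i, jbv (ξ i) ^ (-s + ε) ≤ ∏ i : Fin m, Q ^ (-s + ε) := by
      apply Finset.prod_le_prod
      · intro i _
        exact Real.rpow_nonneg (le_trans zero_le_one (jbv_ge_one _)) _
      · intro i _
        exact Real.rpow_le_rpow (le_trans zero_le_one (jbv_ge_one _)) (hQi i) hεs
    have hC : ∏ _i : Fin m, Q ^ (-s + ε) = Q ^ ((m:ℝ) * (-s + ε)) := by
      rw [Finset.prod_const, Finset.card_univ, Fintype.card_fin,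
        ← Real.rpow_natCast (Q ^ (-s + ε)) m, ← Real.rpow_mul hQ0]
      ring_nf
    calc jbv Ξ ^ ε * ∏ i, jbv (ξ i) ^ (-s + ε)
        ≤ Q ^ ε * ∏ _i : Fin m, Q ^ (-s + ε) := by
          apply mul_le_mul hA hB (Finset.prod_nonneg (fun i _ =>
              Real.rpow_nonneg (le_trans zero_le_one (jbv_ge_one _)) _))
            (Real.rpow_nonneg hQ0 _)
      _ = Q ^ ε * Q ^ ((m:ℝ) * (-s + ε)) := by rw [hC]
      _ = Q ^ (ε + (m:ℝ) * (-s + ε)) := by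
          rw [← Real.rpow_add (lt_of_lt_of_le zero_lt_one hQ1)]
  have hexp : ε + (m:ℝ) * (-s + ε) ≤ -(2 * b') := by
    have h : ((m:ℝ) + 1) * ε = ((m:ℝ) * s - 2 * b') / 2 := by
      rw [hεdef]; field_simp
    nlinarith
  have h3 : Q ^ (ε + (m:ℝ) * (-s + ε)) ≤ Q ^ (-(2 * b')) :=
    Real.rpow_le_rpow_of_exponent_le hQ1 hexp
  have h4 : Q ^ (-(2 * b')) = R ^ (-b') := by
    rw [← hQsq, ← Real.rpow_natCast Q 2, ← Real.rpow_mul hQ0]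
    norm_num
  have h5 : R ^ (-b') ≤ (2 * ((m:ℝ) + 1) * M) ^ (-b') :=
    Real.rpow_le_rpow (le_of_lt hRpos) hRM (by linarith)
  have h6 : (2 * ((m:ℝ) + 1) * M) ^ (-b') = c * M ^ (-b') := by
    rw [hcdef, ← Real.mul_rpow (by nlinarith) (by linarith)]
  -- RHS bound
  have hRHS : M ^ (-b') ≤ D ^ (-b') +
      ∑ i, if D ≤ d i then d i ^ (-b') else 0 := by
    have hsumnn : (0:ℝ) ≤ ∑ i, if D ≤ d i then d i ^ (-b') else 0 := by
      apply Finset.sum_nonneg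
      intro i _
      split
      · exact Real.rpow_nonneg (le_trans zero_le_one (hd1 _)) _
      · exact le_refl 0
    by_cases hcase : S ≤ D
    · have : M = D := max_eq_left hcase
      rw [this]
      linarith
    · push_neg at hcase
      obtain ⟨i₀, _, hi₀⟩ := Finset.exists_mem_eq_sup' hne d
      rw [← hSdef] at hi₀
      have hMS : M = S := max_eq_right (le_of_lt hcase)
      have hDd : D ≤ d i₀ := by rw [← hi₀]; exact le_of_lt hcase
      have hterm : M ^ (-b') ≤ ∑ i, if D ≤ d i then d i ^ (-b') else 0 := by
        have : M ^ (-b') = (if D ≤ d i₀ then d i₀ ^ (-b') else 0) := by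
          rw [if_pos hDd, hMS, hi₀]
        rw [this]
        apply Finset.single_le_sum (f := fun i => if D ≤ d i then d i ^ (-b') else 0)
          (fun i _ => by
            split
            · exact Real.rpow_nonneg (le_trans zero_le_one (hd1 _)) _
            · exact le_refl 0) (Finset.mem_univ i₀)
      have hDnn : (0:ℝ) ≤ D ^ (-b') := by positivity
      linarith
  calc jbv Ξ ^ ε * ∏ i, jbv (ξ i) ^ (-s + ε)
      ≤ Q ^ (ε + (m:ℝ) * (-s + ε)) := h1
    _ ≤ Q ^ (-(2 * b')) := h3
    _ = R ^ (-b') := h4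
    _ ≤ (2 * ((m:ℝ) + 1) * M) ^ (-b') := h5
    _ = c * M ^ (-b') := h6
    _ ≤ c * (D ^ (-b') + ∑ i, if D ≤ d i then d i ^ (-b') else 0) := by
        exact mul_le_mul_of_nonneg_left hRHS (le_of_lt hcpos)
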